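/- Under the hypotheses of the cone-union lemma, D ∪ Cone_p(F) equals Cone_p(D), the cone with tip p over D. -/
import Mathlib


theorem stmt_6 {n : ℕ} (f : (Fin n → ℝ) →ₗ[ℝ] ℝ) (hf : f ≠ 0) (c : ℝ)
    (D : Set (Fin n → ℝ)) (hDc : IsCompact D) (hDconv : Convex ℝ D)
    (hD : D ⊆ {x | f x ≤ c}) (p : Fin n → ℝ) (hp : c < f p)
    (F : Set (Fin n → ℝ)) (hF : F = D ∩ {x | f x = c})
    (hcross : ∀ x ∈ D, segment ℝ x p ∩ {x | f x = c} ⊆ F) :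
    D ∪ (⋃ q ∈ F, segment ℝ p q) = ⋃ s ∈ D, segment ℝ p s := by
  apply Set.Subset.antisymm
  · rintro y (hy | hy)
    · exact Set.mem_biUnion hy (right_mem_segment ℝ p y)
    · simp only [Set.mem_iUnion, exists_prop] at hy ⊢
      obtain ⟨q, hq, hyq⟩ := hy
      exact ⟨q, (hF ▸ hq).1, hyq⟩
  · rintro y hy
    simp only [Set.mem_iUnion, exists_prop] at hy
    obtain ⟨s, hs, a, b, ha, hb, hab, rfl⟩ := hy
    have hfs : f s ≤ c := hD hs
    have hden : 0 < f p - f s := by linarith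
    set u : ℝ := (f p - c) / (f p - f s) with hu
    have hu0 : 0 < u := div_pos (by linarith) hden
    have hu1 : u ≤ 1 := by rw [div_le_one hden]; linarith
    set q := (1 - u) • p + u • s with hq
    have hfq : f q = c := by
      simp only [hq, map_add, map_smul, smul_eq_mul, hu]
      field_simp
      ring
    have hqF : q ∈ F := by
      apply hcross s hs
      refine ⟨⟨u, 1 - u, hu0.le, by linarith, by ring, ?_⟩, hfq⟩
      rw [hq]; abel
    have hqD : q ∈ D := (hF ▸ hqF).1
    clear_value u
    clear hu
    by_cases hbu : b ≤ u
    · right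
      simp only [Set.mem_iUnion, exists_prop]
      refine ⟨q, hqF, 1 - b / u, b / u, ?_, ?_, by ring, ?_⟩
      · have : b / u ≤ 1 := by rw [div_le_one hu0]; exact hbu
        linarith
      · positivity
      · rw [hq]
        match_scalars
        · field_simp; linear_combination (-u) * hab
        · field_simp
    · left
      have hub : u < b := lt_of_not_ge hbu
      have h1u : 0 < 1 - u := by linarith [hub, hb, hab, ha]
      have := hDconv hqD hs (a := 1 - (b - u) / (1 - u)) (b := (b - u) / (1 - u))
        (by
          have : (b - u) / (1 - u) ≤ 1 := by
            rw [div_le_one h1u]; linarith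
          linarith)
        (div_nonneg (by linarith) h1u.le) (by ring)
      convert this using 1
      rw [hq]
      match_scalars
      · field_simp; linear_combination hab
      · field_simp; ring
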